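/- (Theorem 4, approximate greedy guarantee.) Let X be a finite set, let k ≥ 1 with k ≤ |X|, let 0 < ε ≤ 1/2, and let f : (subsets of X) → ℝ be monotone decreasing and supermodular. Let S_0 = ∅ and, for i = 1,…,k, let e_i ∈ X \ S_{i−1} satisfy f(S_{i−1}) − f(S_{i−1} ∪ {e_i}) ≥ (1 − ε)·( f(S_{i−1}) − f(S_{i−1} ∪ {e}) ) for all e ∈ X \ S_{i−1}, and set S_i = S_{i−1} ∪ {e_i}. Then for every S* ⊆ X with |S*| = k, f(∅) − f(S_k) ≥ (1 − 1/e − ε)·(f(∅) − f(S*)). -/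

import Mathlib

open Finset

lemma greedy_key_sum {α : Type*} [DecidableEq α] (f : Finset α → ℝ)
    (hsuper : ∀ S T : Finset α, S ⊆ T → ∀ a : α, a ∉ T →
      f T - f (insert a T) ≤ f S - f (insert a S)) :
    ∀ (T B : Finset α), f B - f (B ∪ T) ≤ ∑ a ∈ T \ B, (f B - f (insert a B)) := by
  intro T
  induction T using Finset.induction_on with
  | empty => intro B; simp
  | @insert a T ha ih =>
    intro B
    have hBT : B ∪ insert a T = insert a (B ∪ T) := by
      ext x; simp only [Finset.mem_union, Finset.mem_insert]; tauto
    by_cases hab : a ∈ B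
    · have h1 : insert a (B ∪ T) = B ∪ T := Finset.insert_eq_self.2 (Finset.mem_union_left _ hab)
      have h2 : insert a T \ B = T \ B := Finset.insert_sdiff_of_mem _ hab
      rw [hBT, h1, h2]; exact ih B
    · have hset : insert a T \ B = insert a (T \ B) := by
        ext x
        simp only [Finset.mem_sdiff, Finset.mem_insert]
        constructor
        · rintro ⟨h | h, hB⟩
          · exact Or.inl h
          · exact Or.inr ⟨h, hB⟩
        · rintro (rfl | ⟨h, hB⟩)
          · exact ⟨Or.inl rfl, hab⟩
          · exact ⟨Or.inr h, hB⟩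
      have hanot : a ∉ T \ B := fun h => ha (Finset.mem_sdiff.1 h).1
      rw [hBT, hset, Finset.sum_insert hanot]
      have h1 := hsuper B (B ∪ T) Finset.subset_union_left a (by simp [hab, ha])
      have h2 := ih B
      linarith

/-- Theorem 4, approximate greedy guarantee: Let `X` be a finite set (the
universe of a fintype `α`), `1 ≤ k ≤ |X|`, `0 < ε ≤ 1/2`, and `f` a monotone decreasing
supermodular set function. If `S 0 = ∅` and at each step `i = 0,…,k−1` the algorithm picks
`e i ∉ S i` whose marginal decrease is at least `(1 − ε)` times every marginal decrease,
setting `S (i+1) = insert (e i) (S i)`, then for every `S*` with `|S*| = k`,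
`f(∅) − f(S k) ≥ (1 − 1/e − ε) (f(∅) − f(S*))`. -/
theorem approximate_greedy_guarantee {α : Type*} [Fintype α] [DecidableEq α]
    (f : Finset α → ℝ)
    (hmono : ∀ S T : Finset α, S ⊆ T → f T ≤ f S)
    (hsuper : ∀ S T : Finset α, S ⊆ T → ∀ a : α, a ∉ T →
      f T - f (insert a T) ≤ f S - f (insert a S))
    (k : ℕ) (hk1 : 1 ≤ k) (hk : k ≤ Fintype.card α)
    (ε : ℝ) (hε : 0 < ε) (hε' : ε ≤ 1 / 2)
    (S : ℕ → Finset α) (e : ℕ → α)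
    (hS0 : S 0 = ∅)
    (hgreedy : ∀ i < k, e i ∉ S i ∧ S (i + 1) = insert (e i) (S i) ∧
      ∀ a : α, a ∉ S i →
        (1 - ε) * (f (S i) - f (insert a (S i))) ≤
          f (S i) - f (insert (e i) (S i)))
    (Sstar : Finset α) (hstar : Sstar.card = k) :
    (1 - 1 / Real.exp 1 - ε) * (f ∅ - f Sstar) ≤ f ∅ - f (S k) := by
  have hkR : (1 : ℝ) ≤ (k : ℝ) := by exact_mod_cast hk1
  have hkpos : (0 : ℝ) < (k : ℝ) := by linarith
  have hε1 : (1 : ℝ) - ε > 0 := by linarith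
  set Δ : ℕ → ℝ := fun i => f (S i) - f Sstar with hΔ
  set c : ℝ := 1 - (1 - ε) / k with hc
  have hc0 : 0 ≤ c := by
    have : (1 - ε) / k ≤ 1 := by
      rw [div_le_one hkpos]; linarith
    simp only [hc]; linarith
  -- step inequality
  have hstep : ∀ i < k, Δ (i + 1) ≤ c * Δ i := by
    intro i hi
    obtain ⟨he, hSi1, hmax⟩ := hgreedy i hi
    set D : ℝ := f (S i) - f (S (i + 1)) with hD
    have hD0 : 0 ≤ D := by
      have := hmono (S i) (S (i + 1)) (by rw [hSi1]; exact Finset.subset_insert _ _)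
      simp only [hD]; linarith
    have hsum := greedy_key_sum f hsuper Sstar (S i)
    have hterm : ∀ a ∈ Sstar \ S i, f (S i) - f (insert a (S i)) ≤ D / (1 - ε) := by
      intro a haa
      have ha' : a ∉ S i := (Finset.mem_sdiff.1 haa).2
      have := hmax a ha'
      rw [← hSi1] at this
      rw [le_div_iff₀ hε1]
      linarith
    have hsum2 : ∑ a ∈ Sstar \ S i, (f (S i) - f (insert a (S i)))
        ≤ (Sstar \ S i).card * (D / (1 - ε)) := by
      calc ∑ a ∈ Sstar \ S i, (f (S i) - f (insert a (S i)))
          ≤ ∑ _a ∈ Sstar \ S i, (D / (1 - ε)) := Finset.sum_le_sum hterm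
        _ = (Sstar \ S i).card * (D / (1 - ε)) := by
            rw [Finset.sum_const, nsmul_eq_mul]
    have hcard : ((Sstar \ S i).card : ℝ) ≤ (k : ℝ) := by
      have : (Sstar \ S i).card ≤ k := by
        rw [← hstar]; exact Finset.card_le_card (Finset.sdiff_subset)
      exact_mod_cast this
    have hDdiv : 0 ≤ D / (1 - ε) := div_nonneg hD0 (le_of_lt hε1)
    have hsum3 : ∑ a ∈ Sstar \ S i, (f (S i) - f (insert a (S i)))
        ≤ (k : ℝ) * (D / (1 - ε)) := by
      calc _ ≤ ((Sstar \ S i).card : ℝ) * (D / (1 - ε)) := hsum2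
        _ ≤ (k : ℝ) * (D / (1 - ε)) := by
            exact mul_le_mul_of_nonneg_right hcard hDdiv
    have hunion : f (S i ∪ Sstar) ≤ f Sstar :=
      hmono Sstar (S i ∪ Sstar) Finset.subset_union_right
    have hΔi : Δ i ≤ (k : ℝ) * (D / (1 - ε)) := by
      have := hsum.trans hsum3
      simp only [hΔ]; linarith
    -- conclude
    have hkey : (1 - ε) * Δ i ≤ (k : ℝ) * D := by
      calc (1 - ε) * Δ i ≤ (1 - ε) * ((k : ℝ) * (D / (1 - ε))) :=
            mul_le_mul_of_nonneg_left hΔi (le_of_lt hε1)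
        _ = (k : ℝ) * D := by field_simp
    have hΔ1 : Δ (i + 1) = Δ i - D := by simp only [hΔ, hD]; ring
    rw [hΔ1, hc]
    have : (1 - (1 - ε) / k) * Δ i = Δ i - (1 - ε) / k * Δ i := by ring
    rw [this]
    have : (1 - ε) / k * Δ i ≤ D := by
      rw [div_mul_eq_mul_div, div_le_iff₀ hkpos]
      linarith [hkey]
    linarith
  -- iterate
  have hiter : ∀ i, i ≤ k → Δ i ≤ c ^ i * Δ 0 := by
    intro i
    induction i with
    | zero => intro _; simp
    | succ n ih =>
      intro hn
      have hnk : n < k := Nat.lt_of_succ_le hn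
      have h1 := hstep n hnk
      have h2 := ih (le_of_lt hnk)
      calc Δ (n + 1) ≤ c * Δ n := h1
        _ ≤ c * (c ^ n * Δ 0) := mul_le_mul_of_nonneg_left h2 hc0
        _ = c ^ (n + 1) * Δ 0 := by ring
  -- bound c^k
  have hck : c ^ k ≤ 1 / Real.exp 1 + ε := by
    have hcexp : c ≤ Real.exp (-((1 - ε) / k)) := by
      have := Real.add_one_le_exp (-((1 - ε) / k))
      simp only [hc]; linarith
    have h1 : c ^ k ≤ Real.exp (-((1 - ε) / k)) ^ k :=
      pow_le_pow_left₀ hc0 hcexp k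
    have h2 : Real.exp (-((1 - ε) / k)) ^ k = Real.exp (ε - 1) := by
      rw [← Real.exp_nat_mul]
      congr 1
      field_simp
      ring
    have hconv := convexOn_exp.2 (Set.mem_univ (0 : ℝ)) (Set.mem_univ (1 : ℝ))
      (by linarith : (0:ℝ) ≤ 1 - ε) (le_of_lt hε) (by ring)
    simp only [smul_eq_mul, mul_zero, mul_one, zero_add, Real.exp_zero] at hconv
    -- hconv : Real.exp ε ≤ (1 - ε) * 1 + ε * Real.exp 1
    have hexppos : (0:ℝ) < Real.exp 1 := Real.exp_pos 1
    have h3 : Real.exp (ε - 1) = Real.exp ε / Real.exp 1 := by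
      rw [Real.exp_sub]
    have h4 : Real.exp ε / Real.exp 1 ≤ 1 / Real.exp 1 + ε := by
      rw [div_le_iff₀ hexppos]
      have : (1 / Real.exp 1 + ε) * Real.exp 1 = 1 + ε * Real.exp 1 := by
        field_simp
      rw [this]
      linarith
    calc c ^ k ≤ Real.exp (-((1 - ε) / k)) ^ k := h1
      _ = Real.exp (ε - 1) := h2
      _ = Real.exp ε / Real.exp 1 := h3
      _ ≤ 1 / Real.exp 1 + ε := h4
  -- finish
  have hΔ0 : Δ 0 = f ∅ - f Sstar := by simp [hΔ, hS0]
  have hΔ0nn : 0 ≤ Δ 0 := by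
    rw [hΔ0]
    have := hmono ∅ Sstar (Finset.empty_subset _)
    linarith
  have hΔk := hiter k le_rfl
  have hfin : Δ k ≤ (1 / Real.exp 1 + ε) * Δ 0 := by
    calc Δ k ≤ c ^ k * Δ 0 := hΔk
      _ ≤ (1 / Real.exp 1 + ε) * Δ 0 := mul_le_mul_of_nonneg_right hck hΔ0nn
  have heq : Δ 0 - Δ k = f ∅ - f (S k) := by
    simp only [hΔ]
    rw [hS0]
    ring
  rw [← heq, ← hΔ0]
  have hring : (1 - 1 / Real.exp 1 - ε) * Δ 0 = Δ 0 - (1 / Real.exp 1 + ε) * Δ 0 := by ring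
  linarith
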